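/- For all k ≥ 1, in the ring R: G_{k_c} − G_{k_b} = E_{k_c}, and E_{k_c} = c q^k (E_{k_c} + E_{k_a} + G_{(k−1)_c}). -/

import Mathlib

open Finset PowerSeries

namespace Primc

/-- Colours: `0 = a`, `1 = b`, `2 = c`, `3 = d`. -/
abbrev Colour := Fin 4

/-- A coloured part `k_z`: an underlying integer `k` together with its colour `z`. -/
abbrev CPart := ℕ × Colour

/-- The matrix `D` of minimal differences, with rows and columns indexed by the colours
`a, b, c, d` in this order. -/
def Dmat : Colour → Colour → ℕ := ![![2,1,2,2], ![1,0,1,1], ![0,1,0,2], ![0,1,0,2]]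

/-- The position of a coloured part in the total order
`1_a < 1_b < 1_c < 1_d < 2_a < 2_b < 2_c < 2_d < ⋯`. -/
def pos (p : CPart) : ℕ := 4 * p.1 + (p.2 : ℕ)

/-- A Primc partition: a finite sequence of coloured positive integers, non-increasing in the
above total order, in which consecutive parts `λ_i, λ_{i+1}` of colours `x, y` satisfy
`λ_i − λ_{i+1} ≥ D(x,y)`. -/
def IsPrimc (l : List CPart) : Prop :=
  (∀ p ∈ l, 1 ≤ p.1) ∧
  l.Chain' fun p r => pos r ≤ pos p ∧ r.1 + Dmat p.2 r.2 ≤ p.1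

/-- The weight of a coloured partition: the sum of the underlying integers of its parts. -/
def wt (l : List CPart) : ℕ := (l.map Prod.fst).sum

/-- The number of parts of colour `z`. -/
def nc (l : List CPart) (z : Colour) : ℕ := l.countP fun p => p.2 == z

/-- `R₀ = ℤ[a,c,d]`, with `a = X 0`, `c = X 1`, `d = X 2`. -/
abbrev R0 := MvPolynomial (Fin 3) ℤ

/-- `R = ℤ[a,c,d][[q]]`. -/
abbrev R := PowerSeries R0

/-- The variable `q`. -/
noncomputable def qq : R := PowerSeries.X

/-- The variable `a`. -/
noncomputable def av : R0 := MvPolynomial.X 0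

/-- The variable `c`. -/
noncomputable def cv : R0 := MvPolynomial.X 1

/-- The variable `d`. -/
noncomputable def dv : R0 := MvPolynomial.X 2

/-- The monomial `a^{#(a-parts)} c^{#(c-parts)} d^{#(d-parts)}` attached to a coloured
partition. -/
noncomputable def mono (l : List CPart) : R0 := av ^ nc l 0 * cv ^ nc l 2 * dv ^ nc l 3

/-- The infinite product `∏_{j ≥ 0} f j`, defined coefficientwise: the coefficient of `qⁿ` is
the corresponding coefficient of the partial product `∏_{j ≤ n} f j`.  This agrees with the
usual (coefficientwise convergent) infinite product whenever the factor `f j` is `≡ 1`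
modulo `q^{j+1}`, as is the case for all products appearing here. -/
noncomputable def iprod (f : ℕ → R) : R :=
  PowerSeries.mk fun n => PowerSeries.coeff n (∏ j ∈ Finset.range (n + 1), f j)

/-- The largest part of a Primc partition (its parts being written in non-increasing order),
with the convention that the empty partition has largest part `0_b`. -/
def top (l : List CPart) : CPart := l.headD (0, 1)

/-- `G_{k_x} ∈ R`: the sum of `q^{|λ|} a^{#(a-parts)} c^{#(c-parts)} d^{#(d-parts)}` over all
Primc partitions `λ` whose largest part is at most `k_x` in the colour order. -/
noncomputable def G (k : ℕ) (x : Colour) : R :=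
  PowerSeries.mk fun n =>
    ∑ᶠ lam : {l : List CPart // IsPrimc l ∧ wt l = n ∧ pos (top l) ≤ pos (k, x)}, mono lam.1

/-- `E_{k_x} ∈ R`: the sum of `q^{|λ|} a^{#(a-parts)} c^{#(c-parts)} d^{#(d-parts)}` over all
Primc partitions `λ` whose largest part is exactly `k_x` (so `E_{0_b} = 1`, the empty
partition having largest part `0_b` by convention). -/
noncomputable def E (k : ℕ) (x : Colour) : R :=
  PowerSeries.mk fun n =>
    ∑ᶠ lam : {l : List CPart // IsPrimc l ∧ wt l = n ∧ top l = (k, x)}, mono lam.1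

/-! ### Auxiliary lemmas -/

lemma length_le_wt : ∀ {l : List CPart}, (∀ p ∈ l, 1 ≤ p.1) → l.length ≤ wt l := by
  intro l
  induction l with
  | nil => simp [wt]
  | cons p t ih =>
    intro h
    have h1 := h p (by simp)
    have h2 := ih fun r hr => h r (List.mem_cons_of_mem _ hr)
    simp only [wt, List.map_cons, List.sum_cons, List.length_cons] at *
    omega

lemma mem_le_wt : ∀ {l : List CPart} {p : CPart}, p ∈ l → p.1 ≤ wt l := by
  intro l
  induction l with
  | nil => simp
  | cons r t ih =>
    intro p hp
    rcases List.mem_cons.1 hp with h | h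
    · subst h; simp [wt]
    · have := ih h
      simp only [wt, List.map_cons, List.sum_cons] at *
      omega

lemma finite_wt (n : ℕ) : {l : List CPart | (∀ p ∈ l, 1 ≤ p.1) ∧ wt l = n}.Finite := by
  have h1 : {l : List (Fin (n + 1) × Colour) | l.length ≤ n}.Finite :=
    List.finite_length_le _ n
  refine Set.Finite.subset
    (h1.image (List.map fun p => (((p.1 : Fin (n + 1)) : ℕ), p.2))) ?_
  rintro l ⟨hpos, hwt⟩
  refine ⟨l.map fun p => ((⟨min p.1 n, by omega⟩ : Fin (n + 1)), p.2), ?_, ?_⟩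
  · simpa using (length_le_wt hpos).trans_eq hwt
  · rw [List.map_map]
    conv_rhs => rw [← List.map_id l]
    refine List.map_congr_left fun p hp => ?_
    have hle : p.1 ≤ n := (mem_le_wt hp).trans_eq hwt
    obtain ⟨v, z⟩ := p
    simp only [Function.comp, id] at *
    congr 1
    omega

lemma finite_PS (n : ℕ) (Q : List CPart → Prop) :
    {l : List CPart | IsPrimc l ∧ wt l = n ∧ Q l}.Finite :=
  (finite_wt n).subset (by rintro l ⟨⟨h1, _⟩, h2, _⟩; exact ⟨h1, h2⟩)

lemma coeff_G (k : ℕ) (x : Colour) (n : ℕ) :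
    PowerSeries.coeff n (G k x) =
      ∑ᶠ l ∈ {l : List CPart | IsPrimc l ∧ wt l = n ∧ pos (top l) ≤ pos (k, x)}, mono l := by
  rw [G, coeff_mk]
  exact finsum_set_coe_eq_finsum_mem (f := mono) _

lemma coeff_E (k : ℕ) (x : Colour) (n : ℕ) :
    PowerSeries.coeff n (E k x) =
      ∑ᶠ l ∈ {l : List CPart | IsPrimc l ∧ wt l = n ∧ top l = (k, x)}, mono l := by
  rw [E, coeff_mk]
  exact finsum_set_coe_eq_finsum_mem (f := mono) _

lemma pos_mk (j : ℕ) (y : Colour) : pos (j, y) = 4 * j + (y : ℕ) := rfl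

@[simp] lemma cval0 : (((0 : Colour)) : ℕ) = 0 := rfl
@[simp] lemma cval1 : (((1 : Colour)) : ℕ) = 1 := rfl
@[simp] lemma cval2 : (((2 : Colour)) : ℕ) = 2 := rfl
@[simp] lemma cval3 : (((3 : Colour)) : ℕ) = 3 := rfl

lemma eq_kc {k : ℕ} {p : CPart} (h2 : pos p ≤ 4 * k + 2) (h1 : ¬ pos p ≤ 4 * k + 1) :
    p = (k, (2 : Colour)) := by
  obtain ⟨j, y⟩ := p
  rw [pos_mk] at h1 h2
  have hy : (y : ℕ) < 4 := y.isLt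
  have hj : j = k := by omega
  have hyv : (y : ℕ) = 2 := by omega
  subst hj
  have : y = (2 : Colour) := Fin.ext (by simpa using hyv)
  rw [this]

lemma split1 (k n : ℕ) :
    {l : List CPart | IsPrimc l ∧ wt l = n ∧ pos (top l) ≤ pos (k, 2)} =
      {l : List CPart | IsPrimc l ∧ wt l = n ∧ pos (top l) ≤ pos (k, 1)} ∪
      {l : List CPart | IsPrimc l ∧ wt l = n ∧ top l = (k, 2)} := by
  ext l
  simp only [Set.mem_setOf_eq, Set.mem_union]
  constructor
  · rintro ⟨h1, h2, h3⟩
    by_cases h : pos (top l) ≤ pos (k, 1)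
    · exact Or.inl ⟨h1, h2, h⟩
    · refine Or.inr ⟨h1, h2, eq_kc (by simpa [pos_mk] using h3) (by simpa [pos_mk] using h)⟩
  · rintro (⟨h1, h2, h3⟩ | ⟨h1, h2, h3⟩)
    · exact ⟨h1, h2, h3.trans (by simp [pos_mk])⟩
    · refine ⟨h1, h2, by rw [h3]⟩

lemma Dmat_c (y : Colour) :
    Dmat 2 y = if (y : ℕ) = 1 then 1 else if (y : ℕ) = 3 then 2 else 0 := by
  fin_cases y <;> rfl

lemma mono_cons (k : ℕ) (μ : List CPart) :
    mono (((k, (2 : Colour)) : CPart) :: μ) = cv * mono μ := by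
  have h0 : (((2 : Colour)) == (0 : Colour)) = false := rfl
  have h2 : (((2 : Colour)) == (2 : Colour)) = true := rfl
  have h3 : (((2 : Colour)) == (3 : Colour)) = false := rfl
  simp only [mono, nc, List.countP_cons, h0, h2, h3, Bool.false_eq_true, if_false, if_true,
    pow_succ, pow_zero, mul_one]
  ring

lemma finsum_mem_const_mul {s : Set (List CPart)} (hs : s.Finite) (r : R0) :
    ∑ᶠ l ∈ s, r * mono l = r * ∑ᶠ l ∈ s, mono l := by
  rw [finsum_mem_eq_finite_toFinset_sum _ hs, finsum_mem_eq_finite_toFinset_sum _ hs,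
    Finset.mul_sum]

lemma cons_image (k n : ℕ) (hk : 1 ≤ k) (hkn : k ≤ n) :
    {l : List CPart | IsPrimc l ∧ wt l = n ∧ top l = (k, (2 : Colour))} =
      (fun μ => ((k, (2 : Colour)) : CPart) :: μ) ''
        ({l : List CPart | IsPrimc l ∧ wt l = n - k ∧ top l = (k, (2 : Colour))} ∪
         {l : List CPart | IsPrimc l ∧ wt l = n - k ∧ top l = (k, (0 : Colour))} ∪
         {l : List CPart | IsPrimc l ∧ wt l = n - k ∧ pos (top l) ≤ pos (k - 1, (2 : Colour))}) := by
  ext l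
  simp only [Set.mem_setOf_eq, Set.mem_union, Set.mem_image]
  constructor
  · rintro ⟨⟨hall, hch⟩, hwt, htop⟩
    cases l with
    | nil =>
      exfalso
      have h0 : (0 : ℕ) = k := congrArg Prod.fst htop
      omega
    | cons p μ =>
      have hp : p = (k, (2 : Colour)) := htop
      subst hp
      unfold List.Chain' at hch
      rw [List.isChain_cons] at hch
      have hμ : IsPrimc μ := ⟨fun r hr => hall r (List.mem_cons_of_mem _ hr), hch.2⟩
      have hwμ : wt μ = n - k := by
        simp only [wt, List.map_cons, List.sum_cons] at hwt ⊢
        omega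
      refine ⟨μ, ?_, rfl⟩
      cases μ with
      | nil =>
        right
        refine ⟨hμ, hwμ, ?_⟩
        show pos (0, (1 : Colour)) ≤ pos (k - 1, (2 : Colour))
        simp only [pos_mk, cval1, cval2]
        omega
      | cons r t =>
        obtain ⟨j, y⟩ := r
        obtain ⟨hposr', hD'⟩ := hch.1 (j, y) rfl
        have hD : j + Dmat 2 y ≤ k := hD'
        have hposr : 4 * j + (y : ℕ) ≤ 4 * k + 2 := hposr'
        have htopμ : top ((j, y) :: t) = (j, y) := rfl
        have hy : (y : ℕ) < 4 := y.isLt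
        rw [Dmat_c] at hD
        by_cases hc2 : (y : ℕ) = 2 ∧ j = k
        · left; left
          refine ⟨hμ, hwμ, ?_⟩
          rw [htopμ]
          have hyy : y = (2 : Colour) := Fin.ext (by simpa using hc2.1)
          rw [hyy, hc2.2]
        · by_cases hc0 : (y : ℕ) = 0 ∧ j = k
          · left; right
            refine ⟨hμ, hwμ, ?_⟩
            rw [htopμ]
            have hyy : y = (0 : Colour) := Fin.ext (by simpa using hc0.1)
            rw [hyy, hc0.2]
          · right
            refine ⟨hμ, hwμ, ?_⟩
            rw [htopμ]
            simp only [pos_mk, cval2]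
            split_ifs at hD <;> omega
  · rintro ⟨μ, hμ, rfl⟩
    have hμP : IsPrimc μ ∧ wt μ = n - k := by
      rcases hμ with (⟨h, h', _⟩ | ⟨h, h', _⟩) | ⟨h, h', _⟩ <;> exact ⟨h, h'⟩
    refine ⟨⟨?_, ?_⟩, ?_, rfl⟩
    · rintro p hp
      rcases List.mem_cons.1 hp with rfl | hp
      · exact hk
      · exact hμP.1.1 p hp
    · unfold List.Chain'
      rw [List.isChain_cons]
      refine ⟨?_, hμP.1.2⟩
      intro r hr
      cases μ with
      | nil => simp at hr
      | cons r' t =>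
        simp only [List.head?_cons, Option.mem_def, Option.some.injEq] at hr
        have hrr : r = r' := hr.symm
        subst hrr
        have htopμ : top (r :: t) = r := rfl
        rcases hμ with (⟨_, _, ht⟩ | ⟨_, _, ht⟩) | ⟨_, _, ht⟩
        · rw [htopμ] at ht
          rw [ht]
          exact ⟨le_rfl, by rw [Dmat_c]; simp⟩
        · rw [htopμ] at ht
          rw [ht]
          constructor
          · simp only [pos_mk, cval0, cval2]; omega
          · rw [Dmat_c]; simp
        · rw [htopμ] at ht
          obtain ⟨j, y⟩ := r
          have hy : (y : ℕ) < 4 := y.isLt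
          simp only [pos_mk, cval2] at ht
          constructor
          · simp only [pos_mk, cval2]
            omega
          · show j + Dmat 2 y ≤ k
            rw [Dmat_c]
            split_ifs <;> omega
    · have h' : (List.map Prod.fst μ).sum = n - k := hμP.2
      simp only [wt, List.map_cons, List.sum_cons, h']
      omega

/-- Equation (2.1b): for all `k ≥ 1`, `G_{k_c} − G_{k_b} = E_{k_c}` and
`E_{k_c} = c q^k (E_{k_c} + E_{k_a} + G_{(k−1)_c})` in `R`. -/
theorem statement9 (k : ℕ) (hk : 1 ≤ k) :
    G k 2 - G k 1 = E k 2 ∧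
    E k 2 = PowerSeries.C cv * qq ^ k * (E k 2 + E k 0 + G (k - 1) 2) := by
  constructor
  · ext n
    rw [map_sub, coeff_G, coeff_G, coeff_E, split1 k n,
      finsum_mem_union ?hd (finite_PS n _) (finite_PS n _)]
    case hd =>
      rw [Set.disjoint_left]
      rintro l ⟨_, _, h3⟩ ⟨_, _, h3'⟩
      rw [h3'] at h3
      simp only [pos_mk, cval1, cval2] at h3
      omega
    ring
  · ext n
    rw [qq, mul_assoc, coeff_C_mul, coeff_X_pow_mul', coeff_E]
    by_cases hkn : k ≤ n
    · rw [if_pos hkn, map_add, map_add, coeff_E, coeff_E, coeff_G, cons_image k n hk hkn,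
        finsum_mem_image (Set.injOn_of_injective (fun a b h => (List.cons.injEq _ _ _ _).mp h |>.2))]
      have hcongr : ∀ μ ∈
          ({l : List CPart | IsPrimc l ∧ wt l = n - k ∧ top l = (k, (2 : Colour))} ∪
           {l : List CPart | IsPrimc l ∧ wt l = n - k ∧ top l = (k, (0 : Colour))} ∪
           {l : List CPart | IsPrimc l ∧ wt l = n - k ∧ pos (top l) ≤ pos (k - 1, (2 : Colour))}),
          mono (((k, (2 : Colour)) : CPart) :: μ) = cv * mono μ := fun μ _ => mono_cons k μ
      rw [finsum_mem_congr rfl hcongr,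
        finsum_mem_const_mul (((finite_PS _ _).union (finite_PS _ _)).union (finite_PS _ _)) cv,
        finsum_mem_union ?hd2 ((finite_PS _ _).union (finite_PS _ _)) (finite_PS _ _),
        finsum_mem_union ?hd1 (finite_PS _ _) (finite_PS _ _)]
      case hd1 =>
        rw [Set.disjoint_left]
        rintro l ⟨_, _, h3⟩ ⟨_, _, h3'⟩
        rw [h3] at h3'
        have : (2 : Colour) = (0 : Colour) := congrArg Prod.snd h3'
        exact absurd (congrArg Fin.val this) (by simp)
      case hd2 =>
        rw [Set.disjoint_left]
        rintro l hl ⟨_, _, h3'⟩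
        have htop : pos (top l) = 4 * k + 2 ∨ pos (top l) = 4 * k := by
          rcases hl with ⟨_, _, h3⟩ | ⟨_, _, h3⟩
          · left; rw [h3]; simp [pos_mk]
          · right; rw [h3]; simp [pos_mk]
        simp only [pos_mk, cval2] at h3'
        omega
    · rw [if_neg hkn, mul_zero]
      have hempty : {l : List CPart | IsPrimc l ∧ wt l = n ∧ top l = ((k : ℕ), (2 : Colour))} =
          (∅ : Set (List CPart)) := by
        ext l
        simp only [Set.mem_setOf_eq, Set.mem_empty_iff_false, iff_false]
        rintro ⟨h1, h2, h3⟩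
        cases l with
        | nil =>
          have h0 : (0 : ℕ) = k := congrArg Prod.fst h3
          omega
        | cons p t =>
          have hp : p = (k, (2 : Colour)) := h3
          have hle : p.1 ≤ n := h2 ▸ mem_le_wt (List.mem_cons_self)
          rw [hp] at hle
          exact hkn hle
      rw [hempty, finsum_mem_empty]

end Primc
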